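/- In the graph K_m × K_n (direct product of complete graphs) with k ≥ 0 and m, n ≥ k+5, the complement of the set Ā = {(i,i) : i ∈ [k+4]} is a k-ftmv set; together with the matching upper bound, fμᵏ(K_m × K_n) = mn − 4 − k. -/

import Mathlib

open SimpleGraph

variable {V : Type*}

/-- `X` is a `k`-fault-tolerant mutual-visibility set of `G`: for any two distinct
non-adjacent vertices `u v ∈ X` there are `k+1` internally disjoint shortest
`u,v`-paths whose only vertices in `X` are `u` and `v`. -/
def IsFtmvSet (G : SimpleGraph V) (k : ℕ) (X : Set V) : Prop :=
  ∀ u ∈ X, ∀ v ∈ X, u ≠ v → ¬ G.Adj u v →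
    ∃ P : Fin (k + 1) → G.Path u v,
      (∀ i, (P i).1.length = G.dist u v) ∧
      (∀ i, ∀ w ∈ (P i).1.support, w ∈ X → w = u ∨ w = v) ∧
      (∀ i j, i ≠ j → ∀ w, w ∈ (P i).1.support → w ∈ (P j).1.support → w = u ∨ w = v)

/-- The `k`-fault-tolerant mutual-visibility number: maximum cardinality of a `k`-ftmv set. -/
noncomputable def ftmvNum (G : SimpleGraph V) (k : ℕ) : ℕ :=
  sSup {n | ∃ X : Set V, IsFtmvSet G k X ∧ X.ncard = n}

/-- The clique number of `G`. -/
noncomputable def cliqueNum' (G : SimpleGraph V) : ℕ :=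
  sSup {n | ∃ s : Finset V, G.IsNClique n s}

/-- The direct (tensor) product of complete graphs `K_m × K_n`:
`(i,j)` and `(i',j')` are adjacent iff `i ≠ i'` and `j ≠ j'`. -/
def KmKnDirect (m n : ℕ) : SimpleGraph (Fin m × Fin n) where
  Adj p q := p.1 ≠ q.1 ∧ p.2 ≠ q.2
  symm := ⟨fun p q h => ⟨h.1.symm, h.2.symm⟩⟩
  loopless := ⟨fun p h => h.1 rfl⟩

lemma dist_two' {G : SimpleGraph V} {u v w : V} (h1 : G.Adj u w) (h2 : G.Adj w v)
    (hne : u ≠ v) (hna : ¬G.Adj u v) : G.dist u v = 2 := by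
  have hle := G.dist_le (Walk.cons h1 (Walk.cons h2 Walk.nil))
  simp only [Walk.length_cons, Walk.length_nil] at hle
  have hr : G.Reachable u v := ⟨Walk.cons h1 (Walk.cons h2 Walk.nil)⟩
  have h0 := hr.pos_dist_of_ne hne
  have h1' : G.dist u v ≠ 1 := fun h => hna (dist_eq_one_iff_adj.mp h)
  omega

lemma path_two {G : SimpleGraph V} {u v w : V} (h1 : G.Adj u w) (h2 : G.Adj w v)
    (hne : u ≠ v) : (Walk.cons h1 (Walk.cons h2 Walk.nil)).IsPath := by
  refine Walk.IsPath.cons (Walk.IsPath.cons Walk.IsPath.nil ?_) ?_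
  · simp [h2.ne]
  · simp [h1.ne, hne]

lemma walk_length_two {G : SimpleGraph V} {u v : V} (p : G.Walk u v)
    (hp : p.length = 2) :
    ∃ w, ∃ (_ : G.Adj u w) (_ : G.Adj w v), p.support = [u, w, v] := by
  cases p with
  | nil => simp at hp
  | cons h q =>
    cases q with
    | nil => simp at hp
    | cons h' q' =>
      cases q' with
      | nil => exact ⟨_, h, h', by simp⟩
      | cons h'' q'' => simp [Walk.length_cons] at hp

lemma exists_fresh' {α : Type*} [Fintype α] (S : Finset α) (h : S.card < Fintype.card α) :
    ∃ a, a ∉ S := by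
  by_contra h'
  push_neg at h'
  have := Finset.card_le_card (fun x _ => h' x : Finset.univ ⊆ S)
  simp only [Finset.card_univ] at this
  omega

lemma filter_card_le' {α : Type*} [DecidableEq α] (Y : Finset α) (p : α → Prop) [DecidablePred p]
    (y1 y2 y3 : α) (h1 : y1 ∈ Y) (h2 : y2 ∈ Y) (h3 : y3 ∈ Y)
    (d12 : y1 ≠ y2) (d13 : y1 ≠ y3) (d23 : y2 ≠ y3)
    (n1 : ¬ p y1) (n2 : ¬ p y2) (n3 : ¬ p y3) :
    (Y.filter p).card + 3 ≤ Y.card := by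
  have hc3 : ({y1, y2, y3} : Finset α).card = 3 := by
    rw [Finset.card_insert_of_notMem (by simp [d12, d13]),
      Finset.card_insert_of_notMem (by simp [d23]), Finset.card_singleton]
  have hdisj : Disjoint (Y.filter p) {y1, y2, y3} := by
    rw [Finset.disjoint_right]
    intro a ha haf
    have hpa := (Finset.mem_filter.mp haf).2
    simp only [Finset.mem_insert, Finset.mem_singleton] at ha
    rcases ha with rfl | rfl | rfl <;> [exact n1 hpa; exact n2 hpa; exact n3 hpa]
  have hsub : Y.filter p ∪ {y1, y2, y3} ⊆ Y := by
    apply Finset.union_subset (Finset.filter_subset _ _)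
    intro a ha
    simp only [Finset.mem_insert, Finset.mem_singleton] at ha
    rcases ha with rfl | rfl | rfl <;> assumption
  have := Finset.card_le_card hsub
  rwa [Finset.card_union_of_disjoint hdisj, hc3] at this
lemma cover_lemma (k m n : ℕ) (hm : k + 5 ≤ m) (hn : k + 5 ≤ n)
    (Y : Finset (Fin m × Fin n)) (hY : Y.card ≤ k + 3) :
    ∃ (i : Fin m) (a b : Fin n), a ≠ b ∧ (i, a) ∉ Y ∧ (i, b) ∉ Y ∧
      (Y.filter fun y => y.1 ≠ i ∧ y.2 ≠ a ∧ y.2 ≠ b).card ≤ k := by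
  have hmpos : 0 < m := by omega
  have hnpos : 0 < n := by omega
  have hrows : (Y.image Prod.fst).card < Fintype.card (Fin m) := by
    have := Finset.card_image_le (s := Y) (f := Prod.fst)
    simp only [Fintype.card_fin]; omega
  have hcols : (Y.image Prod.snd).card < Fintype.card (Fin n) := by
    have := Finset.card_image_le (s := Y) (f := Prod.snd)
    simp only [Fintype.card_fin]; omega
  by_cases hcol : ∃ a b : Fin n, ∀ y ∈ Y, y.2 = a ∨ y.2 = b
  · obtain ⟨a, b, hab⟩ := hcol
    obtain ⟨b', hb'ne, hcov⟩ : ∃ b', b' ≠ a ∧ ∀ y ∈ Y, y.2 = a ∨ y.2 = b' := by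
      rcases eq_or_ne a b with rfl | h
      · obtain ⟨c, hc⟩ := exists_fresh' ({a} : Finset (Fin n))
          (by simp [Fintype.card_fin]; omega)
        exact ⟨c, by simpa using hc, fun y hy => Or.inl ((hab y hy).elim id id)⟩
      · exact ⟨b, h.symm, hab⟩
    obtain ⟨i, hi⟩ := exists_fresh' (Y.image Prod.fst) hrows
    refine ⟨i, a, b', hb'ne.symm, ?_, ?_, ?_⟩
    · exact fun h => hi (Finset.mem_image_of_mem _ h)
    · exact fun h => hi (Finset.mem_image_of_mem _ h)
    · have : Y.filter (fun y => y.1 ≠ i ∧ y.2 ≠ a ∧ y.2 ≠ b') = ∅ := by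
        rw [Finset.filter_eq_empty_iff]
        intro y hy hcond
        rcases hcov y hy with h | h
        · exact hcond.2.1 h
        · exact hcond.2.2 h
      rw [this]; simp
  · by_cases hrow : ∃ y1 ∈ Y, ∃ y2 ∈ Y, y1.1 = y2.1 ∧ y1 ≠ y2
    · obtain ⟨y1, hy1, y2, hy2, hreq, hne12⟩ := hrow
      set r := y1.1 with hr
      by_cases hy3 : ∃ y3 ∈ Y, y3.1 ≠ r ∧ (r, y3.2) ∉ Y
      · obtain ⟨y3, hy3Y, hy3r, hy3n⟩ := hy3
        obtain ⟨b, hb⟩ := exists_fresh' (insert y3.2 (Y.image Prod.snd))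
          (by
            have := Finset.card_image_le (s := Y) (f := Prod.snd)
            have := Finset.card_insert_le y3.2 (Y.image Prod.snd)
            simp only [Fintype.card_fin]; omega)
        simp only [Finset.mem_insert, not_or] at hb
        refine ⟨r, y3.2, b, fun h => hb.1 h.symm, hy3n, ?_, ?_⟩
        · intro h; exact hb.2 (by simpa using Finset.mem_image_of_mem Prod.snd h)
        · have key := filter_card_le' Y (fun y => y.1 ≠ r ∧ y.2 ≠ y3.2 ∧ y.2 ≠ b)
            y1 y2 y3 hy1 hy2 hy3Y hne12
            (fun h => hy3r (by rw [← h]))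
            (fun h => hy3r (by rw [← h]; exact hreq.symm))
            (fun h => h.1 rfl) (fun h => h.1 hreq.symm) (fun h => h.2.1 rfl)
          omega
      · push_neg at hy3
        by_cases hz : ∃ z3 ∈ Y, z3.1 = r ∧ z3 ≠ y1 ∧ z3 ≠ y2
        · obtain ⟨z3, hz3Y, hz3r, hz31, hz32⟩ := hz
          obtain ⟨a, ha⟩ := exists_fresh' (Y.image Prod.snd) hcols
          obtain ⟨b, hb⟩ := exists_fresh' (insert a (Y.image Prod.snd))
            (by
              have := Finset.card_image_le (s := Y) (f := Prod.snd)
              have := Finset.card_insert_le a (Y.image Prod.snd)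
              simp only [Fintype.card_fin]; omega)
          simp only [Finset.mem_insert, not_or] at hb
          refine ⟨r, a, b, fun h => hb.1 h.symm, ?_, ?_, ?_⟩
          · exact fun h => ha (by simpa using Finset.mem_image_of_mem Prod.snd h)
          · exact fun h => hb.2 (by simpa using Finset.mem_image_of_mem Prod.snd h)
          · have key := filter_card_le' Y (fun y => y.1 ≠ r ∧ y.2 ≠ a ∧ y.2 ≠ b)
              y1 y2 z3 hy1 hy2 hz3Y hne12 hz31.symm hz32.symm
              (fun h => h.1 rfl) (fun h => h.1 hreq.symm) (fun h => h.1 hz3r)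
            omega
        · exfalso
          push_neg at hz
          apply hcol
          refine ⟨y1.2, y2.2, fun y hy => ?_⟩
          by_cases hyr : y.1 = r
          · by_cases h1 : y = y1
            · exact Or.inl (by rw [h1])
            · exact Or.inr (by rw [hz y hy hyr h1])
          · have hmem := hy3 y hy hyr
            by_cases h1 : (r, y.2) = y1
            · exact Or.inl (by rw [← h1])
            · have heq := hz (r, y.2) hmem rfl h1
              exact Or.inr (by rw [← heq])
    · push_neg at hrow
      push_neg at hcol
      have c0 : Fin n := ⟨0, hnpos⟩
      obtain ⟨y1, hy1, _, _⟩ := hcol c0 c0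
      obtain ⟨y2, hy2, hy2a, _⟩ := hcol y1.2 y1.2
      obtain ⟨y3, hy3Y, h3a, h3b⟩ := hcol y1.2 y2.2
      refine ⟨y1.1, y2.2, y3.2, fun h => h3b h.symm, ?_, ?_, ?_⟩
      · intro h
        have := hrow _ h _ hy1 rfl
        exact hy2a (by rw [← this])
      · intro h
        have := hrow _ h _ hy1 rfl
        exact h3a (by rw [← this])
      · have key := filter_card_le' Y (fun y => y.1 ≠ y1.1 ∧ y.2 ≠ y2.2 ∧ y.2 ≠ y3.2)
          y1 y2 y3 hy1 hy2 hy3Y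
          (fun h => hy2a (congrArg Prod.snd h).symm)
          (fun h => h3a (congrArg Prod.snd h).symm)
          (fun h => h3b (congrArg Prod.snd h).symm)
          (fun h => h.1 rfl) (fun h => h.2.1 rfl) (fun h => h.2.2 rfl)
        omega
lemma part1 (k m n : ℕ) (hm : k + 5 ≤ m) (hn : k + 5 ≤ n) :
    IsFtmvSet (KmKnDirect m n) k
      {p : Fin m × Fin n | ¬ ((p.1 : ℕ) = (p.2 : ℕ) ∧ (p.1 : ℕ) < k + 4)} := by
  intro u hu v hv hne hnadj
  set G := KmKnDirect m n with hG
  -- non-adjacency means same row or same column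
  have hcase : u.1 = v.1 ∨ u.2 = v.2 := by
    by_contra h
    push_neg at h
    exact hnadj ⟨h.1, h.2⟩
  -- bad values: depending on case
  obtain ⟨x1, x2, x3, hmid⟩ :
      ∃ x1 x2 x3 : ℕ, ∀ t : ℕ, t < k + 4 → t ≠ x1 → t ≠ x2 → t ≠ x3 →
        ∀ (htm : t < m) (htn : t < n),
          G.Adj u (⟨t, htm⟩, ⟨t, htn⟩) ∧ G.Adj (⟨t, htm⟩, ⟨t, htn⟩) v := by
    rcases hcase with h | h
    · refine ⟨(u.1 : ℕ), (u.2 : ℕ), (v.2 : ℕ), fun t ht h1 h2 h3 htm htn => ?_⟩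
      refine ⟨⟨fun he => h1 (by rw [he]), fun he => h2 (by rw [he])⟩,
        ⟨fun he => h1 ?_, fun he => h3 (by rw [← he])⟩⟩
      rw [← h] at he; rw [← he]
    · refine ⟨(u.2 : ℕ), (u.1 : ℕ), (v.1 : ℕ), fun t ht h1 h2 h3 htm htn => ?_⟩
      refine ⟨⟨fun he => h2 (by rw [he]), fun he => h1 (by rw [he])⟩,
        ⟨fun he => h3 (by rw [← he]), fun he => h1 ?_⟩⟩
      rw [← h] at he; rw [← he]
  classical
  -- available middle values
  set T : Finset ℕ := (Finset.range (k + 4)).filter (fun t => t ≠ x1 ∧ t ≠ x2 ∧ t ≠ x3)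
    with hT
  have hTcard : k + 1 ≤ T.card := by
    have hsub : Finset.range (k + 4) \ ({x1, x2, x3} : Finset ℕ) ⊆ T := by
      intro t ht
      simp only [Finset.mem_sdiff, Finset.mem_insert, Finset.mem_singleton, not_or,
        Finset.mem_range] at ht
      simp only [hT, Finset.mem_filter, Finset.mem_range]
      exact ⟨ht.1, ht.2.1, ht.2.2.1, ht.2.2.2⟩
    have h1 := Finset.le_card_sdiff ({x1, x2, x3} : Finset ℕ) (Finset.range (k + 4))
    have h2 := Finset.card_le_card hsub
    have h3 : ({x1, x2, x3} : Finset ℕ).card ≤ 3 := by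
      apply le_trans (Finset.card_insert_le _ _)
      have := Finset.card_insert_le x2 ({x3} : Finset ℕ)
      simp only [Finset.card_singleton] at this ⊢
      omega
    simp only [Finset.card_range] at h1
    omega
  set g := T.orderEmbOfCardLe hTcard with hg
  have hgmem : ∀ j : Fin (k + 1), g j ∈ T := fun j => T.orderEmbOfCardLe_mem hTcard j
  have hkey : ∀ j : Fin (k + 1), g j < k + 4 ∧ g j ≠ x1 ∧ g j ≠ x2 ∧ g j ≠ x3 := by
    intro j
    have := hgmem j
    simp only [hT, Finset.mem_filter, Finset.mem_range] at this
    exact ⟨this.1, this.2⟩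
  set mid : Fin (k + 1) → Fin m × Fin n := fun j =>
    (⟨g j, by have := (hkey j).1; omega⟩, ⟨g j, by have := (hkey j).1; omega⟩) with hmiddef
  have hadj1 : ∀ j, G.Adj u (mid j) := fun j =>
    ((hmid (g j) (hkey j).1 (hkey j).2.1 (hkey j).2.2.1 (hkey j).2.2.2 _ _).1)
  have hadj2 : ∀ j, G.Adj (mid j) v := fun j =>
    ((hmid (g j) (hkey j).1 (hkey j).2.1 (hkey j).2.2.1 (hkey j).2.2.2 _ _).2)
  have hmidnX : ∀ j, mid j ∈
      {p : Fin m × Fin n | ¬ ((p.1 : ℕ) = (p.2 : ℕ) ∧ (p.1 : ℕ) < k + 4)} → False := by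
    intro j hj
    exact hj ⟨rfl, (hkey j).1⟩
  have hmidinj : Function.Injective mid := by
    intro i j h
    have : (g i : ℕ) = g j := congrArg (fun p => ((Prod.fst p : Fin m) : ℕ)) h
    exact g.injective (by exact_mod_cast this)
  have hdist : G.dist u v = 2 := dist_two' (hadj1 0) (hadj2 0) hne hnadj
  refine ⟨fun j => ⟨Walk.cons (hadj1 j) (Walk.cons (hadj2 j) Walk.nil),
    path_two (hadj1 j) (hadj2 j) hne⟩, fun j => ?_, fun j w hw hwX => ?_, ?_⟩
  · simp [hdist]
  · simp only [Walk.support_cons, Walk.support_nil, List.mem_cons, List.mem_singleton,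
      List.not_mem_nil, or_false] at hw
    rcases hw with rfl | rfl | rfl
    · exact Or.inl rfl
    · exact absurd hwX (fun h => hmidnX j h)
    · exact Or.inr rfl
  · intro i j hij w hwi hwj
    simp only [Walk.support_cons, Walk.support_nil, List.mem_cons, List.mem_singleton,
      List.not_mem_nil, or_false] at hwi hwj
    rcases hwi with rfl | rfl | rfl
    · exact Or.inl rfl
    · rcases hwj with h | h | h
      · exact Or.inl h
      · exact absurd (hmidinj h) hij
      · exact Or.inr h
    · exact Or.inr rfl
lemma upper_bound (k m n : ℕ) (hm : k + 5 ≤ m) (hn : k + 5 ≤ n)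
    (X : Set (Fin m × Fin n)) (hX : IsFtmvSet (KmKnDirect m n) k X) :
    X.ncard ≤ m * n - 4 - k := by
  classical
  set G := KmKnDirect m n with hG
  set Y := Xᶜ with hYdef
  have hfin : Y.Finite := Set.toFinite Y
  have htot : X.ncard + Y.ncard = m * n := by
    have := Set.ncard_add_ncard_compl X
    rwa [Nat.card_eq_fintype_card, Fintype.card_prod, Fintype.card_fin, Fintype.card_fin] at this
  suffices h : k + 4 ≤ Y.ncard by omega
  by_contra hYc
  push_neg at hYc
  set YF := hfin.toFinset with hYF
  have hYFcard : YF.card ≤ k + 3 := by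
    rw [← Set.ncard_eq_toFinset_card Y hfin]; omega
  obtain ⟨i, a, b, hab, hia, hib, hfil⟩ := cover_lemma k m n hm hn YF hYFcard
  have hmemX : ∀ p : Fin m × Fin n, p ∉ YF → p ∈ X := by
    intro p hp
    rw [hYF, Set.Finite.mem_toFinset] at hp
    exact not_not.mp hp
  have hu : ((i, a) : Fin m × Fin n) ∈ X := hmemX _ hia
  have hv : ((i, b) : Fin m × Fin n) ∈ X := hmemX _ hib
  have hne : ((i, a) : Fin m × Fin n) ≠ (i, b) := fun h => hab (congrArg Prod.snd h)
  have hnadj : ¬ G.Adj (i, a) (i, b) := fun h => h.1 rfl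
  obtain ⟨P, hlen, hout, hdisj⟩ := hX _ hu _ hv hne hnadj
  -- distance is two
  obtain ⟨i', hi'⟩ := exists_fresh' ({i} : Finset (Fin m))
    (by simp only [Finset.card_singleton, Fintype.card_fin]; omega)
  obtain ⟨c, hc⟩ := exists_fresh' ({a, b} : Finset (Fin n))
    (by
      have := Finset.card_insert_le a ({b} : Finset (Fin n))
      simp only [Finset.card_singleton] at this
      have : ({a, b} : Finset (Fin n)).card ≤ 2 := this
      simp only [Fintype.card_fin]; omega)
  simp only [Finset.mem_singleton] at hi'
  simp only [Finset.mem_insert, Finset.mem_singleton, not_or] at hc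
  have hdist : G.dist (i, a) (i, b) = 2 := by
    refine dist_two' (w := (i', c)) ⟨fun h => hi' h.symm, fun h => hc.1 h.symm⟩
      ⟨hi', hc.2⟩ hne hnadj
  -- extract middle vertices
  have hmid : ∀ j : Fin (k + 1), ∃ w, G.Adj (i, a) w ∧ G.Adj w (i, b) ∧
      (P j).1.support = [(i, a), w, (i, b)] := by
    intro j
    obtain ⟨w, h1, h2, h3⟩ := walk_length_two (P j).1 (by rw [hlen j, hdist])
    exact ⟨w, h1, h2, h3⟩
  choose mid hmad1 hmad2 hmsup using hmid
  have hmidne1 : ∀ j, mid j ≠ (i, a) := fun j => (hmad1 j).ne.symm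
  have hmidne2 : ∀ j, mid j ≠ (i, b) := fun j => (hmad2 j).ne
  have hmidY : ∀ j, mid j ∈ YF := by
    intro j
    rw [hYF, Set.Finite.mem_toFinset]
    intro hmX
    rcases hout j (mid j) (by rw [hmsup j]; simp) hmX with h | h
    · exact hmidne1 j h
    · exact hmidne2 j h
  have hmidfil : ∀ j, mid j ∈ YF.filter fun y => y.1 ≠ i ∧ y.2 ≠ a ∧ y.2 ≠ b := by
    intro j
    rw [Finset.mem_filter]
    refine ⟨hmidY j, fun h => (hmad1 j).1 h.symm, fun h => (hmad1 j).2 h.symm,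
      fun h => (hmad2 j).2 h⟩
  have hmidinj : Function.Injective mid := by
    intro s t h
    by_contra hst
    have hsup : mid s ∈ (P t).1.support := by rw [h, hmsup t]; simp
    rcases hdisj s t hst (mid s) (by rw [hmsup s]; simp) hsup with h' | h'
    · exact hmidne1 s h'
    · exact hmidne2 s h'
  have hcard : k + 1 ≤ (YF.filter fun y => y.1 ≠ i ∧ y.2 ≠ a ∧ y.2 ≠ b).card := by
    have := Finset.card_le_card_of_injOn (s := (Finset.univ : Finset (Fin (k + 1))))
      mid (fun j _ => hmidfil j) (fun x _ y _ h => hmidinj h)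
    simpa using this
  omega

theorem stmt16 (k m n : ℕ) (hm : k + 5 ≤ m) (hn : k + 5 ≤ n) :
    IsFtmvSet (KmKnDirect m n) k
      {p : Fin m × Fin n | ¬ ((p.1 : ℕ) = (p.2 : ℕ) ∧ (p.1 : ℕ) < k + 4)} ∧
    ftmvNum (KmKnDirect m n) k = m * n - 4 - k := by
  classical
  have hpart1 := part1 k m n hm hn
  set X₀ : Set (Fin m × Fin n) :=
    {p : Fin m × Fin n | ¬ ((p.1 : ℕ) = (p.2 : ℕ) ∧ (p.1 : ℕ) < k + 4)} with hX₀
  -- compute the cardinality of X₀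
  have hf : ∀ t : Fin (k + 4), (t : ℕ) < m ∧ (t : ℕ) < n := by
    intro t; have := t.2; omega
  set f : Fin (k + 4) → Fin m × Fin n :=
    fun t => (⟨t, (hf t).1⟩, ⟨t, (hf t).2⟩) with hfdef
  have hfinj : Function.Injective f := by
    intro s t h
    have : (s : ℕ) = (t : ℕ) := congrArg (fun p => ((Prod.fst p : Fin m) : ℕ)) h
    exact Fin.ext this
  have hXcompl : X₀ = (Set.range f)ᶜ := by
    ext p
    simp only [hX₀, Set.mem_setOf_eq, Set.mem_compl_iff, Set.mem_range, not_exists]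
    constructor
    · intro h t ht
      apply h
      rw [← ht]
      exact ⟨rfl, t.2⟩
    · intro h hc
      exact h ⟨(p.1 : ℕ), hc.2⟩ (by
        rw [hfdef]
        refine Prod.ext (Fin.ext rfl) (Fin.ext ?_)
        exact hc.1)
  have hrange : (Set.range f).ncard = k + 4 := by
    rw [← Set.image_univ, Set.ncard_image_of_injective _ hfinj, Set.ncard_univ,
      Nat.card_eq_fintype_card, Fintype.card_fin]
  have hcardX : X₀.ncard = m * n - 4 - k := by
    have h1 := Set.ncard_add_ncard_compl (Set.range f)
    rw [Nat.card_eq_fintype_card, Fintype.card_prod, Fintype.card_fin, Fintype.card_fin,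
      hrange] at h1
    rw [hXcompl]
    omega
  refine ⟨hpart1, ?_⟩
  have hmemS : m * n - 4 - k ∈ {n' | ∃ X : Set (Fin m × Fin n),
      IsFtmvSet (KmKnDirect m n) k X ∧ X.ncard = n'} := ⟨X₀, hpart1, hcardX⟩
  have hub : ∀ s ∈ {n' | ∃ X : Set (Fin m × Fin n),
      IsFtmvSet (KmKnDirect m n) k X ∧ X.ncard = n'}, s ≤ m * n - 4 - k := by
    rintro s ⟨X, hX, rfl⟩
    exact upper_bound k m n hm hn X hX
  exact le_antisymm (csSup_le ⟨_, hmemS⟩ hub) (le_csSup ⟨_, hub⟩ hmemS)
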